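/- arXiv:2201.01640 — 3 statements merged into one kernel-verified Lean document; each statement's English description precedes it below -/
import Mathlib

section
/- Let G be a finite simple graph with m vertices that is a frame graph in ℝ^n (respectively, in ℂ^n), where m > n. Then G is a frame graph in ℝ^{n+1} (respectively, in ℂ^{n+1}). That is, if there is a spanning family f_1, …, f_m of ℝ^n (resp. ℂ^n) such that for all distinct i, j, ⟨f_i, f_j⟩ ≠ 0 if and only if {i,j} is an edge of G, then there is such a spanning family of ℝ^{n+1} (resp. ℂ^{n+1}). -/
open scoped ComplexOrder

/-- The minimum positive semidefinite rank of a simple graph `G` over the field `𝕜`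
(`𝕜 = ℝ` gives `mr₊^ℝ`, `𝕜 = ℂ` gives `mr₊^ℂ`): the minimum rank over all positive
semidefinite Hermitian matrices whose off-diagonal zero/nonzero pattern matches `G`. -/
noncomputable def mrPlus (𝕜 : Type) [RCLike 𝕜] {V : Type} [Fintype V] [DecidableEq V]
    (G : SimpleGraph V) : ℕ :=
  sInf {r : ℕ | ∃ A : Matrix V V 𝕜, A.PosSemidef ∧
    (∀ i j : V, i ≠ j → (A i j ≠ 0 ↔ G.Adj i j)) ∧ A.rank = r}

/-- `G` is a frame graph in the `d`-dimensional inner product space over `𝕜`: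
there is a spanning family (frame) `f` indexed by the vertices such that distinct
vertices are adjacent iff the corresponding vectors are non-orthogonal. -/
def IsFrameGraphIn (𝕜 : Type) [RCLike 𝕜] {V : Type} (G : SimpleGraph V) (d : ℕ) : Prop :=
  ∃ f : V → EuclideanSpace 𝕜 (Fin d),
    Submodule.span 𝕜 (Set.range f) = ⊤ ∧
    ∀ i j : V, i ≠ j → ((inner 𝕜 (f i) (f j) : 𝕜) ≠ 0 ↔ G.Adj i j)

/-- The strong product of two simple graphs. -/
def strongProd {α β : Type} (G : SimpleGraph α) (H : SimpleGraph β) :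
    SimpleGraph (α × β) where
  Adj x y := (x.1 = y.1 ∧ H.Adj x.2 y.2) ∨ (x.2 = y.2 ∧ G.Adj x.1 y.1) ∨
    (G.Adj x.1 y.1 ∧ H.Adj x.2 y.2)
  symm := by
    refine ⟨?_⟩
    rintro ⟨a, b⟩ ⟨c, d⟩ (⟨h1, h2⟩ | ⟨h1, h2⟩ | ⟨h1, h2⟩)
    · exact Or.inl ⟨h1.symm, h2.symm⟩
    · exact Or.inr (Or.inl ⟨h1.symm, h2.symm⟩)
    · exact Or.inr (Or.inr ⟨h1.symm, h2.symm⟩)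
  loopless := by
    refine ⟨?_⟩
    rintro ⟨a, b⟩ (⟨_, h⟩ | ⟨_, h⟩ | ⟨h, _⟩)
    · exact H.loopless.irrefl b h
    · exact G.loopless.irrefl a h
    · exact G.loopless.irrefl a h

/-- The join `G ∨ H` of two graphs with disjoint vertex sets. -/
def joinGraph {α β : Type} (G : SimpleGraph α) (H : SimpleGraph β) :
    SimpleGraph (α ⊕ β) where
  Adj x y := match x, y with
    | Sum.inl a, Sum.inl b => G.Adj a b
    | Sum.inr a, Sum.inr b => H.Adj a b
    | Sum.inl _, Sum.inr _ => True
    | Sum.inr _, Sum.inl _ => True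
  symm := by
    refine ⟨?_⟩
    rintro (a | a) (b | b) h
    · exact h.symm
    · trivial
    · trivial
    · exact h.symm
  loopless := by
    refine ⟨?_⟩
    rintro (a | a) h
    · exact G.loopless.irrefl a h
    · exact H.loopless.irrefl a h

/-- The vertex-sum `G · H` of `G` and `H`, obtained by identifying the vertex `a` of `G`
with the vertex `b` of `H` (and no other vertices or edges shared). -/
def vertexSum {α β : Type} (G : SimpleGraph α) (H : SimpleGraph β) (a : α) (b : β) :
    SimpleGraph (α ⊕ {y : β // y ≠ b}) where
  Adj x y := match x, y with
    | Sum.inl u, Sum.inl u' => G.Adj u u'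
    | Sum.inr v, Sum.inr v' => H.Adj v.1 v'.1
    | Sum.inl u, Sum.inr v => u = a ∧ H.Adj b v.1
    | Sum.inr v, Sum.inl u => u = a ∧ H.Adj b v.1
  symm := by
    refine ⟨?_⟩
    rintro (u | v) (u' | v') h
    · exact h.symm
    · exact h
    · exact h
    · exact h.symm
  loopless := by
    refine ⟨?_⟩
    rintro (u | v) h
    · exact G.loopless.irrefl u h
    · exact H.loopless.irrefl v.1 h

/-- The corona product `G ∘ H`: one copy of `G`, one copy of `H` for each vertex of `G`,
with every vertex of the `i`-th copy of `H` joined to the `i`-th vertex of `G`. -/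
def corona {α β : Type} (G : SimpleGraph α) (H : SimpleGraph β) :
    SimpleGraph (α ⊕ α × β) where
  Adj x y := match x, y with
    | Sum.inl u, Sum.inl u' => G.Adj u u'
    | Sum.inr p, Sum.inr q => p.1 = q.1 ∧ H.Adj p.2 q.2
    | Sum.inl u, Sum.inr p => u = p.1
    | Sum.inr p, Sum.inl u => u = p.1
  symm := by
    refine ⟨?_⟩
    rintro (u | p) (u' | q) h
    · exact h.symm
    · exact h
    · exact h
    · exact ⟨h.1.symm, h.2.symm⟩
  loopless := by
    refine ⟨?_⟩
    rintro (u | p) h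
    · exact G.loopless.irrefl u h
    · exact H.loopless.irrefl p.2 h.2

/-- `v : Fin m → V` is an OS-vertex set of `G`: the vertices are distinct, and for each `k`
there is `w` adjacent to `v k`, different from all `v l` with `l ≤ k`, and non-adjacent to
every `v l` (`l < k`) lying in the connected component of `v k` in the subgraph induced by
`{v 0, …, v k}`. -/
def IsOSSet {V : Type} (G : SimpleGraph V) {m : ℕ} (v : Fin m → V) : Prop :=
  Function.Injective v ∧
  ∀ k : Fin m, ∃ w : V,
    G.Adj (v k) w ∧
    (∀ l : Fin m, l ≤ k → w ≠ v l) ∧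
    ∀ l : Fin m, (hl : l < k) →
      (G.induce {x : V | ∃ l' : Fin m, l' ≤ k ∧ x = v l'}).Reachable
        ⟨v l, ⟨l, le_of_lt hl, rfl⟩⟩ ⟨v k, ⟨k, le_refl k, rfl⟩⟩ →
      ¬ G.Adj w (v l)

/-- The OS-number of `G`: the maximum cardinality of an OS-vertex set of `G`. -/
noncomputable def OSNumber {V : Type} (G : SimpleGraph V) : ℕ :=
  sSup {m : ℕ | ∃ v : Fin m → V, IsOSSet G v}

lemma frame_aux {𝕜 : Type} [RCLike 𝕜] {m n : ℕ} (hmn : n < m) (G : SimpleGraph (Fin m))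
    (h : IsFrameGraphIn 𝕜 G n) : IsFrameGraphIn 𝕜 G (n + 1) := by
  obtain ⟨f, hspan, hinner⟩ := h
  -- f is not linearly independent
  have hnli : ¬ LinearIndependent 𝕜 f := by
    intro hli
    have := hli.fintype_card_le_finrank
    simp at this
    omega
  rw [Fintype.not_linearIndependent_iff] at hnli
  obtain ⟨c, hc0, i, hci⟩ := hnli
  -- f i is in the span of the others
  set Sp : Submodule 𝕜 (EuclideanSpace 𝕜 (Fin n)) :=
    Submodule.span 𝕜 (f '' {j | j ≠ i}) with hSp
  have hfi : f i ∈ Sp := by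
    have hsum : c i • f i = -∑ j ∈ Finset.univ.erase i, c j • f j := by
      have := Finset.add_sum_erase Finset.univ (fun j => c j • f j) (Finset.mem_univ i)
      rw [← this] at hc0
      linear_combination (norm := module) hc0
    have hmem : (∑ j ∈ Finset.univ.erase i, c j • f j) ∈ Sp := by
      refine Submodule.sum_mem _ fun j hj => Submodule.smul_mem _ _ ?_
      exact Submodule.subset_span ⟨j, Finset.mem_erase.1 hj |>.1, rfl⟩
    have : f i = (c i)⁻¹ • (c i • f i) := by rw [smul_smul, inv_mul_cancel₀ hci, one_smul]
    rw [this, hsum]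
    exact Submodule.smul_mem _ _ (Submodule.neg_mem _ hmem)
  have hSpTop : Sp = ⊤ := by
    rw [eq_top_iff, ← hspan, Submodule.span_le]
    rintro x ⟨j, rfl⟩
    by_cases hj : j = i
    · subst hj; exact hfi
    · exact Submodule.subset_span ⟨j, hj, rfl⟩
  -- new frame
  set g : Fin m → EuclideanSpace 𝕜 (Fin (n + 1)) :=
    fun j => (WithLp.toLp 2 (Fin.snoc (f j).ofLp (if j = i then (1 : 𝕜) else 0) : Fin (n+1) → 𝕜) : EuclideanSpace 𝕜 (Fin (n+1))) with hg
  have hinner' : ∀ j k : Fin m, j ≠ k → (inner 𝕜 (g j) (g k) : 𝕜) = inner 𝕜 (f j) (f k) := by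
    intro j k hjk
    simp only [PiLp.inner_apply, RCLike.inner_apply]
    rw [Fin.sum_univ_castSucc]
    simp only [hg, Fin.snoc_castSucc, Fin.snoc_last]
    have : (if k = i then (1:𝕜) else 0) * (starRingEnd 𝕜) (if j = i then (1:𝕜) else 0) = 0 := by
      by_cases hji : j = i
      · rw [if_neg (fun hk : k = i => hjk (hji.trans hk.symm)), zero_mul]
      · rw [if_neg hji, map_zero, mul_zero]
    rw [this, add_zero]
  refine ⟨g, ?_, fun j k hjk => by rw [hinner' j k hjk]; exact hinner j k hjk⟩
  -- span
  set S : Submodule 𝕜 (EuclideanSpace 𝕜 (Fin (n+1))) := Submodule.span 𝕜 (Set.range g) with hS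
  have key : ∀ x ∈ Sp, (WithLp.toLp 2 (Fin.snoc x.ofLp 0 : Fin (n+1) → 𝕜) : EuclideanSpace 𝕜 (Fin (n+1))) ∈ S := by
    intro x hx
    induction hx using Submodule.span_induction with
    | mem y hy =>
        obtain ⟨j, hj, rfl⟩ := hy
        have : (WithLp.toLp 2 (Fin.snoc (f j).ofLp 0 : Fin (n+1) → 𝕜) : EuclideanSpace 𝕜 (Fin (n+1))) = g j := by
          simp [hg, if_neg hj]
        rw [this]; exact Submodule.subset_span ⟨j, rfl⟩
    | zero =>
        have : (WithLp.toLp 2 (Fin.snoc (0 : EuclideanSpace 𝕜 (Fin n)).ofLp (0:𝕜) : Fin (n+1) → 𝕜) : EuclideanSpace 𝕜 (Fin (n+1))) = 0 := by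
          ext k
          refine Fin.lastCases ?_ ?_ k <;> simp
        rw [this]; exact Submodule.zero_mem _
    | add a b _ _ ha hb =>
        have : (WithLp.toLp 2 (Fin.snoc (a + b).ofLp (0:𝕜) : Fin (n+1) → 𝕜) : EuclideanSpace 𝕜 (Fin (n+1)))
            = (WithLp.toLp 2 (Fin.snoc a.ofLp 0 : Fin (n+1) → 𝕜) : EuclideanSpace 𝕜 (Fin (n+1))) + (WithLp.toLp 2 (Fin.snoc b.ofLp 0 : Fin (n+1) → 𝕜) : EuclideanSpace 𝕜 (Fin (n+1))) := by
          ext k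
          refine Fin.lastCases ?_ ?_ k <;> simp
        rw [this]; exact Submodule.add_mem _ ha hb
    | smul r a _ ha =>
        have : (WithLp.toLp 2 (Fin.snoc (r • a).ofLp (0:𝕜) : Fin (n+1) → 𝕜) : EuclideanSpace 𝕜 (Fin (n+1)))
            = r • (WithLp.toLp 2 (Fin.snoc a.ofLp 0 : Fin (n+1) → 𝕜) : EuclideanSpace 𝕜 (Fin (n+1))) := by
          ext k
          refine Fin.lastCases ?_ ?_ k <;> simp
        rw [this]; exact Submodule.smul_mem _ _ ha
  have he : (EuclideanSpace.single (Fin.last n) (1:𝕜) : EuclideanSpace 𝕜 (Fin (n+1))) ∈ S := by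
    have h1 : g i ∈ S := Submodule.subset_span ⟨i, rfl⟩
    set w : EuclideanSpace 𝕜 (Fin (n+1)) := (WithLp.toLp 2 (Fin.snoc (f i).ofLp 0 : Fin (n+1) → 𝕜) : EuclideanSpace 𝕜 (Fin (n+1))) with hw
    have h2 : w ∈ S := key _ hfi
    have : (EuclideanSpace.single (Fin.last n) (1:𝕜) : EuclideanSpace 𝕜 (Fin (n+1)))
        = g i - w := by
      ext k
      refine Fin.lastCases ?_ ?_ k
      · simp [hg, hw]
      · intro k'
        simp [hg, hw, Pi.single_eq_of_ne (Fin.castSucc_lt_last k').ne]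
    rw [this]; exact Submodule.sub_mem _ h1 h2
  rw [eq_top_iff]
  intro x _
  have hxinit : (WithLp.toLp 2 (Fin.init x.ofLp) : EuclideanSpace 𝕜 (Fin n)) ∈ Sp := by rw [hSpTop]; trivial
  have hx : x = (WithLp.toLp 2 (Fin.snoc (Fin.init x.ofLp) 0 : Fin (n+1) → 𝕜) : EuclideanSpace 𝕜 (Fin (n+1)))
      + x (Fin.last n) • (EuclideanSpace.single (Fin.last n) (1:𝕜) : EuclideanSpace 𝕜 (Fin (n+1))) := by
    ext k
    refine Fin.lastCases ?_ ?_ k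
    · simp
    · intro k'
      simp [Fin.init, Pi.single_eq_of_ne (Fin.castSucc_lt_last k').ne]
  rw [hx]
  exact Submodule.add_mem _ (key _ hxinit) (Submodule.smul_mem _ _ he)

/-- a graph with `m > n` vertices that is a frame graph in `ℝ^n`
(resp. `ℂ^n`) is also a frame graph in `ℝ^(n+1)` (resp. `ℂ^(n+1)`). -/
theorem isFrameGraphIn_succ_of_isFrameGraphIn (m n : ℕ) (hmn : n < m)
    (G : SimpleGraph (Fin m)) :
    (IsFrameGraphIn ℝ G n → IsFrameGraphIn ℝ G (n + 1)) ∧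
    (IsFrameGraphIn ℂ G n → IsFrameGraphIn ℂ G (n + 1)) :=
  ⟨frame_aux hmn G, frame_aux hmn G⟩
end

section
/- Let G be a connected graph on n ≥ 2 vertices and H a connected graph on m ≥ 2 vertices whose vertex sets share exactly one vertex v, and let G·H be their vertex-sum at v. Suppose G is a frame graph in a complex inner product space of dimension d exactly when n' ≤ d ≤ n, and H is a frame graph in a complex inner product space of dimension d exactly when m' ≤ d ≤ m. Then G·H is a frame graph in a complex inner product space of dimension d exactly when n' + m' ≤ d ≤ n + m − 1. Equivalently, mr_+^C(G·H) = mr_+^C(G) + mr_+^C(H). -/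
open scoped ComplexOrder

section AuxFrameLemmas

open Submodule Module Set
open scoped Matrix

lemma frame_of_family {V : Type} (K : SimpleGraph V) {E : Type} [NormedAddCommGroup E]
    [InnerProductSpace ℂ E] [FiniteDimensional ℂ E] (f : V → E)
    (hf : ∀ i j : V, i ≠ j → ((inner ℂ (f i) (f j) : ℂ) ≠ 0 ↔ K.Adj i j)) :
    IsFrameGraphIn ℂ K (Module.finrank ℂ (Submodule.span ℂ (Set.range f))) := by
  set W := Submodule.span ℂ (Set.range f) with hW
  have hmem : ∀ i, f i ∈ W := fun i => subset_span (Set.mem_range_self i)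
  set g : V → W := fun i => ⟨f i, hmem i⟩ with hg
  have hspan : Submodule.span ℂ (Set.range g) = ⊤ := by
    apply Submodule.map_injective_of_injective W.injective_subtype
    rw [Submodule.map_span, Submodule.map_top, Submodule.range_subtype]
    have : W.subtype '' (Set.range g) = Set.range f := by
      ext x
      constructor
      · rintro ⟨y, ⟨i, rfl⟩, rfl⟩; exact ⟨i, rfl⟩
      · rintro ⟨i, rfl⟩; exact ⟨g i, ⟨i, rfl⟩, rfl⟩
    rw [this]
  let e := (stdOrthonormalBasis ℂ W).repr
  refine ⟨fun i => e (g i), ?_, ?_⟩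
  · have : Set.range (fun i => e (g i)) = e '' (Set.range g) := by
      ext x; constructor
      · rintro ⟨i, rfl⟩; exact ⟨g i, ⟨i, rfl⟩, rfl⟩
      · rintro ⟨y, ⟨i, rfl⟩, rfl⟩; exact ⟨i, rfl⟩
    rw [this, show (⇑e) = ⇑(e.toLinearEquiv.toLinearMap) from rfl, ← Submodule.map_span, hspan,
      Submodule.map_top]
    exact LinearMap.range_eq_top.mpr e.surjective
  · intro i j hij
    rw [e.inner_map_map]
    have : (inner ℂ (g i) (g j) : ℂ) = inner ℂ (f i) (f j) := rfl
    rw [this]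
    exact hf i j hij

lemma frame_le_card {V : Type} [Fintype V] {K : SimpleGraph V} {d : ℕ}
    (h : IsFrameGraphIn ℂ K d) : d ≤ Fintype.card V := by
  obtain ⟨f, hspan, -⟩ := h
  have := finrank_range_le_card (R := ℂ) f
  rw [Set.finrank, hspan, finrank_top, finrank_euclideanSpace_fin] at this
  exact this

lemma frame_succ {V : Type} [Fintype V] {K : SimpleGraph V} {d : ℕ}
    (h : IsFrameGraphIn ℂ K d) (hd : d < Fintype.card V) : IsFrameGraphIn ℂ K (d + 1) := by
  classical
  obtain ⟨f, hspan, hf⟩ := h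
  have hnotind : ¬ LinearIndependent ℂ f := by
    intro hind
    have := hind.fintype_card_le_finrank
    rw [finrank_euclideanSpace_fin] at this
    omega
  obtain ⟨i, hi⟩ : ∃ i, f i ∈ span ℂ (f '' (univ \ {i})) := by
    by_contra hc
    push_neg at hc
    exact hnotind (linearIndependent_iff_notMem_span.mpr hc)
  -- embedding into bigger space
  let E' := EuclideanSpace ℂ (Fin d ⊕ Fin 1)
  let ι : EuclideanSpace ℂ (Fin d) →ₗ[ℂ] E' :=
    { toFun := fun x => WithLp.toLp 2 (Sum.elim x 0)
      map_add' := by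
        intro x y; ext p; cases p with
        | inl k => rfl
        | inr k => show (0:ℂ) = 0 + 0; rw [add_zero]
      map_smul' := by
        intro c x; ext p; cases p with
        | inl k => rfl
        | inr k => show (0:ℂ) = c • 0; rw [smul_zero] }
  let e1 : E' := WithLp.toLp 2 (Sum.elim 0 1)
  let g : V → E' := fun j => WithLp.toLp 2 (Sum.elim (f j) (fun _ => if j = i then 1 else 0))
  have hgne : ∀ j, j ≠ i → g j = ι (f j) := by
    intro j hj
    ext p; cases p with
    | inl k => rfl
    | inr k => show (if j = i then (1:ℂ) else 0) = 0; rw [if_neg hj]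
  have hpattern : ∀ x y : V, x ≠ y → ((inner ℂ (g x) (g y) : ℂ) ≠ 0 ↔ K.Adj x y) := by
    intro x y hxy
    have : (inner ℂ (g x) (g y) : ℂ) = inner ℂ (f x) (f y) := by
      rw [PiLp.inner_apply, PiLp.inner_apply, Fintype.sum_sum_type]
      have h2 : ∀ k : Fin 1, (inner ℂ (g x (Sum.inr k)) (g y (Sum.inr k)) : ℂ) = 0 := by
        intro k
        show (inner ℂ (if x = i then (1:ℂ) else 0) (if y = i then (1:ℂ) else 0) : ℂ) = 0
        by_cases hx : x = i
        · have hy : y ≠ i := fun hy => hxy (hx.trans hy.symm)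
          rw [if_pos hx, if_neg hy]; simp
        · rw [if_neg hx]; simp
      rw [Finset.sum_congr rfl (fun k _ => h2 k), Finset.sum_const, smul_zero, add_zero]
      rfl
    rw [this]; exact hf x y hxy
  have key := frame_of_family K g hpattern
  have hspan' : span ℂ (range g) = ⊤ := by
    have hιfj : ∀ j, j ≠ i → ι (f j) ∈ span ℂ (range g) := by
      intro j hj; rw [← hgne j hj]; exact subset_span ⟨j, rfl⟩
    have hιfi : ι (f i) ∈ span ℂ (range g) := by
      have : f i ∈ span ℂ (f '' (univ \ {i})) := hi
      have hmap := Submodule.mem_map_of_mem (f := ι) this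
      rw [Submodule.map_span] at hmap
      refine span_le.mpr ?_ hmap
      rintro x ⟨y, ⟨j, ⟨-, hj⟩, rfl⟩, rfl⟩
      exact hιfj j (by simpa using hj)
    have hι : ∀ x, ι x ∈ span ℂ (range g) := by
      intro x
      have hx : x ∈ span ℂ (range f) := by rw [hspan]; trivial
      have : span ℂ (range f) ≤ (span ℂ (range g)).comap ι := by
        rw [span_le]
        rintro - ⟨j, rfl⟩
        by_cases hj : j = i
        · subst hj; exact hιfi
        · exact hιfj j hj
      exact this hx
    have he1 : e1 ∈ span ℂ (range g) := by
      have : e1 = g i - ι (f i) := by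
        ext p; cases p with
        | inl k => show (0:ℂ) = f i k - f i k; rw [sub_self]
        | inr k => show (1:ℂ) = (if i = i then (1:ℂ) else 0) - 0; rw [if_pos rfl, sub_zero]
      rw [this]
      exact sub_mem (subset_span ⟨i, rfl⟩) hιfi
    rw [eq_top_iff]
    intro y _
    have hy : y = ι (WithLp.toLp 2 (fun k => y (Sum.inl k))) + y (Sum.inr 0) • e1 := by
      ext p; cases p with
      | inl k => show y (Sum.inl k) = y (Sum.inl k) + y (Sum.inr 0) * 0; ring
      | inr k =>
        have : k = 0 := Subsingleton.elim _ _
        subst this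
        show y (Sum.inr 0) = 0 + y (Sum.inr 0) * 1; ring
    rw [hy]
    exact add_mem (hι _) (smul_mem _ _ he1)
  rw [hspan', finrank_top, finrank_euclideanSpace] at key
  simpa using key

lemma frame_mono {V : Type} [Fintype V] {K : SimpleGraph V} {d0 d : ℕ}
    (h : IsFrameGraphIn ℂ K d0) (h1 : d0 ≤ d) (h2 : d ≤ Fintype.card V) :
    IsFrameGraphIn ℂ K d := by
  induction d, h1 using Nat.le_induction with
  | base => exact h
  | succ k hk ih => exact frame_succ (ih (by omega)) (by omega)

lemma frame_exists {V : Type} [Fintype V] [LinearOrder V] (K : SimpleGraph V) :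
    ∃ d, IsFrameGraphIn ℂ K d := by
  classical
  let f : V → EuclideanSpace ℂ (V × V) := fun i =>
    WithLp.toLp 2 fun p : V × V => if K.Adj p.1 p.2 ∧ p.1 < p.2 ∧ (p.1 = i ∨ p.2 = i) then (1 : ℂ) else 0
  refine ⟨_, frame_of_family K f ?_⟩
  intro i j hij
  have key : ∀ p : V × V, (inner ℂ (f i p) (f j p) : ℂ) =
      if p = (i ⊓ j, i ⊔ j) ∧ K.Adj i j then 1 else 0 := by
    intro p
    have hforward : (K.Adj p.1 p.2 ∧ p.1 < p.2 ∧ (p.1 = i ∨ p.2 = i)) ∧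
        (K.Adj p.1 p.2 ∧ p.1 < p.2 ∧ (p.1 = j ∨ p.2 = j)) →
        (p = (i ⊓ j, i ⊔ j) ∧ K.Adj i j) := by
      rintro ⟨⟨hadj, hlt, hpi⟩, ⟨-, -, hpj⟩⟩
      rcases hpi with hpi | hpi <;> rcases hpj with hpj | hpj
      · exact absurd (hpi.symm.trans hpj) hij
      · refine ⟨?_, hpi ▸ hpj ▸ hadj⟩
        subst hpi; subst hpj
        refine Prod.ext ?_ ?_
        · simp [inf_eq_left.mpr hlt.le]
        · simp [sup_eq_right.mpr hlt.le]
      · refine ⟨?_, (hpj ▸ hpi ▸ hadj : K.Adj j i).symm⟩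
        subst hpi; subst hpj
        refine Prod.ext ?_ ?_
        · simp [inf_eq_right.mpr hlt.le]
        · simp [sup_eq_left.mpr hlt.le]
      · exact absurd (hpi.symm.trans hpj) hij
    have hback : (p = (i ⊓ j, i ⊔ j) ∧ K.Adj i j) →
        (K.Adj p.1 p.2 ∧ p.1 < p.2 ∧ (p.1 = i ∨ p.2 = i)) ∧
        (K.Adj p.1 p.2 ∧ p.1 < p.2 ∧ (p.1 = j ∨ p.2 = j)) := by
      rintro ⟨rfl, hadj⟩
      rcases le_total i j with hle | hle
      · have hlt : i < j := lt_of_le_of_ne hle hij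
        have h1 : i ⊓ j = i := inf_eq_left.mpr hle
        have h2 : i ⊔ j = j := sup_eq_right.mpr hle
        exact ⟨⟨by simp [h1, h2, hadj], by simp [h1, h2, hlt], Or.inl (by simp [h1])⟩,
          ⟨by simp [h1, h2, hadj], by simp [h1, h2, hlt], Or.inr (by simp [h2])⟩⟩
      · have hlt : j < i := lt_of_le_of_ne hle (Ne.symm hij)
        have h1 : i ⊓ j = j := inf_eq_right.mpr hle
        have h2 : i ⊔ j = i := sup_eq_left.mpr hle
        exact ⟨⟨by simp [h1, h2, hadj.symm], by simp [h1, h2, hlt], Or.inr (by simp [h2])⟩,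
          ⟨by simp [h1, h2, hadj.symm], by simp [h1, h2, hlt], Or.inl (by simp [h1])⟩⟩
    show (if _ then (1:ℂ) else 0) * (starRingEnd ℂ) (if _ then (1:ℂ) else 0) = _
    by_cases hA : (K.Adj p.1 p.2 ∧ p.1 < p.2 ∧ (p.1 = i ∨ p.2 = i)) <;>
      by_cases hB : (K.Adj p.1 p.2 ∧ p.1 < p.2 ∧ (p.1 = j ∨ p.2 = j))
    · rw [if_pos hA, if_pos hB, if_pos (hforward ⟨hA, hB⟩)]; simp
    · rw [if_pos hA, if_neg hB, if_neg (fun hC => hB (hback hC).2)]; simp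
    · rw [if_neg hA, if_pos hB, if_neg (fun hC => hA (hback hC).1)]; simp
    · rw [if_neg hA, if_neg hB, if_neg (fun hC => hA (hback hC).1)]; simp
  rw [PiLp.inner_apply]
  rw [Finset.sum_congr rfl (fun p _ => key p)]
  by_cases hadj : K.Adj i j
  · simp only [hadj, and_true]
    rw [Finset.sum_ite_eq' Finset.univ (i ⊓ j, i ⊔ j) (fun _ => (1:ℂ))]
    simp
  · simp [hadj]

lemma frame_iff_rank {V : Type} [Fintype V] [DecidableEq V] (K : SimpleGraph V) (d : ℕ) :
    IsFrameGraphIn ℂ K d ↔ ∃ A : Matrix V V ℂ, A.PosSemidef ∧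
      (∀ i j : V, i ≠ j → (A i j ≠ 0 ↔ K.Adj i j)) ∧ A.rank = d := by
  constructor
  · rintro ⟨f, hspan, hf⟩
    set B : Matrix (Fin d) V ℂ := Matrix.of fun k i => f i k with hB
    refine ⟨Bᴴ * B, Matrix.posSemidef_conjTranspose_mul_self _, ?_, ?_⟩
    · intro i j hij
      have : (Bᴴ * B) i j = (inner ℂ (f i) (f j) : ℂ) := by
        rw [Matrix.mul_apply, PiLp.inner_apply]
        simp [Matrix.conjTranspose_apply, RCLike.inner_apply, hB, mul_comm]
      rw [this]
      exact hf i j hij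
    · rw [Matrix.rank_conjTranspose_mul_self, Matrix.rank_eq_finrank_span_cols]
      have : Set.range B.col = (WithLp.linearEquiv 2 ℂ (Fin d → ℂ)).toLinearMap '' Set.range f := by
        ext x; simp [hB, Matrix.transpose]; rfl
      rw [this, ← Submodule.map_span, hspan, Submodule.map_top, LinearEquiv.range]
      rw [finrank_top]; exact Module.finrank_fin_fun ℂ
  · rintro ⟨A, hA, hpat, hrank⟩
    obtain ⟨B, rfl⟩ : ∃ B : Matrix V V ℂ, A = Bᴴ * B := by
      open scoped MatrixOrder in
      obtain ⟨B, hB⟩ := CStarAlgebra.nonneg_iff_eq_star_mul_self.mp hA.nonneg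
      exact ⟨B, hB⟩
    let f : V → EuclideanSpace ℂ V := fun i => WithLp.toLp 2 fun k => B k i
    have hinner : ∀ i j, (inner ℂ (f i) (f j) : ℂ) = (Bᴴ * B) i j := by
      intro i j
      rw [Matrix.mul_apply, PiLp.inner_apply]
      simp [Matrix.conjTranspose_apply, RCLike.inner_apply, f, mul_comm]
    have key := frame_of_family K f (fun i j hij => by rw [hinner i j]; exact hpat i j hij)
    have : Module.finrank ℂ (Submodule.span ℂ (Set.range f)) = (Bᴴ * B).rank := by
      rw [Matrix.rank_conjTranspose_mul_self, Matrix.rank_eq_finrank_span_cols]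
      have hBT : Set.range B.col = (WithLp.linearEquiv 2 ℂ (V → ℂ)).toLinearMap '' Set.range f := by
        ext x; simp [f, Matrix.transpose]; rfl
      rw [hBT, ← Submodule.map_span, LinearEquiv.finrank_map_eq]
    rw [this, hrank] at key
    exact key

lemma mrPlus_eq_sInf_frame {V : Type} [Fintype V] [DecidableEq V] (K : SimpleGraph V) :
    mrPlus ℂ K = sInf {d : ℕ | IsFrameGraphIn ℂ K d} := by
  unfold mrPlus
  congr 1
  ext d
  exact (frame_iff_rank K d).symm

lemma vsum_lower {n m n' m' : ℕ} {G : SimpleGraph (Fin n)} {H : SimpleGraph (Fin m)}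
    {a : Fin n} {b : Fin m}
    (hG : ∀ d : ℕ, IsFrameGraphIn ℂ G d → n' ≤ d)
    (hH : ∀ d : ℕ, IsFrameGraphIn ℂ H d → m' ≤ d)
    {d : ℕ} (h : IsFrameGraphIn ℂ (vertexSum G H a b) d) : n' + m' ≤ d := by
  classical
  obtain ⟨f, -, hf⟩ := h
  set U1 : Submodule ℂ (EuclideanSpace ℂ (Fin d)) :=
    Submodule.span ℂ (Set.range (fun i : {i : Fin n // i ≠ a} => f (Sum.inl i.1))) with hU1
  set U2 : Submodule ℂ (EuclideanSpace ℂ (Fin d)) :=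
    Submodule.span ℂ (Set.range (fun v : {y : Fin m // y ≠ b} => f (Sum.inr v))) with hU2
  have hmem1 : ∀ i : Fin n, i ≠ a → f (Sum.inl i) ∈ U1 :=
    fun i hi => Submodule.subset_span ⟨⟨i, hi⟩, rfl⟩
  have hmem2 : ∀ v : {y : Fin m // y ≠ b}, f (Sum.inr v) ∈ U2 :=
    fun v => Submodule.subset_span ⟨v, rfl⟩
  set g1 : EuclideanSpace ℂ (Fin d) := (↑(orthogonalProjection U1 (f (Sum.inl a))) : EuclideanSpace ℂ (Fin d)) with hg1
  set g2 : EuclideanSpace ℂ (Fin d) := (↑(orthogonalProjection U2 (f (Sum.inl a))) : EuclideanSpace ℂ (Fin d)) with hg2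
  have hproj1 : ∀ x ∈ U1, (inner ℂ x g1 : ℂ) = inner ℂ x (f (Sum.inl a)) ∧
      (inner ℂ g1 x : ℂ) = inner ℂ (f (Sum.inl a)) x := by
    intro x hx
    have h0 : (inner ℂ (f (Sum.inl a) - g1) x : ℂ) = 0 :=
      Submodule.starProjection_inner_eq_zero (f (Sum.inl a)) x hx
    have h0' : (inner ℂ x (f (Sum.inl a) - g1) : ℂ) = 0 := by
      rw [← inner_conj_symm, h0, map_zero]
    constructor
    · rw [inner_sub_right] at h0'; linear_combination -h0'
    · rw [inner_sub_left] at h0; linear_combination -h0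
  have hproj2 : ∀ x ∈ U2, (inner ℂ x g2 : ℂ) = inner ℂ x (f (Sum.inl a)) ∧
      (inner ℂ g2 x : ℂ) = inner ℂ (f (Sum.inl a)) x := by
    intro x hx
    have h0 : (inner ℂ (f (Sum.inl a) - g2) x : ℂ) = 0 :=
      Submodule.starProjection_inner_eq_zero (f (Sum.inl a)) x hx
    have h0' : (inner ℂ x (f (Sum.inl a) - g2) : ℂ) = 0 := by
      rw [← inner_conj_symm, h0, map_zero]
    constructor
    · rw [inner_sub_right] at h0'; linear_combination -h0'
    · rw [inner_sub_left] at h0; linear_combination -h0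
  have hadjl : ∀ i j : Fin n, i ≠ j →
      ((inner ℂ (f (Sum.inl i)) (f (Sum.inl j)) : ℂ) ≠ 0 ↔ G.Adj i j) :=
    fun i j hij => hf (Sum.inl i) (Sum.inl j) (fun hc => hij (Sum.inl.inj hc))
  set F1 : Fin n → EuclideanSpace ℂ (Fin d) :=
    fun i => if i = a then g1 else f (Sum.inl i) with hF1
  have hF1pat : ∀ i j : Fin n, i ≠ j → ((inner ℂ (F1 i) (F1 j) : ℂ) ≠ 0 ↔ G.Adj i j) := by
    intro i j hij
    by_cases hi : i = a <;> by_cases hj : j = a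
    · exact absurd (hi.trans hj.symm) hij
    · rw [hF1]
      simp only [if_pos hi, if_neg hj]
      rw [(hproj1 (f (Sum.inl j)) (hmem1 j hj)).2, hi]
      exact hadjl a j (hi ▸ hij)
    · rw [hF1]
      simp only [if_pos hj, if_neg hi]
      rw [(hproj1 (f (Sum.inl i)) (hmem1 i hi)).1, hj]
      exact hadjl i a (hj ▸ hij)
    · rw [hF1]
      simp only [if_neg hi, if_neg hj]
      exact hadjl i j hij
  set F2 : Fin m → EuclideanSpace ℂ (Fin d) :=
    fun v => if hv : v = b then g2 else f (Sum.inr ⟨v, hv⟩) with hF2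
  have hF2pat : ∀ v w : Fin m, v ≠ w → ((inner ℂ (F2 v) (F2 w) : ℂ) ≠ 0 ↔ H.Adj v w) := by
    intro v w hvw
    by_cases hv : v = b <;> by_cases hw : w = b
    · exact absurd (hv.trans hw.symm) hvw
    · rw [hF2]
      simp only [dif_pos hv, dif_neg hw]
      rw [(hproj2 (f (Sum.inr ⟨w, hw⟩)) (hmem2 ⟨w, hw⟩)).2]
      have hne : (Sum.inl a : Fin n ⊕ {y : Fin m // y ≠ b}) ≠ Sum.inr ⟨w, hw⟩ := by simp
      have h2 := hf (Sum.inl a) (Sum.inr ⟨w, hw⟩) hne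
      have h3 : (vertexSum G H a b).Adj (Sum.inl a) (Sum.inr ⟨w, hw⟩) ↔ (a = a ∧ H.Adj b w) :=
        Iff.rfl
      rw [h2, h3, hv]
      simp
    · rw [hF2]
      simp only [dif_pos hw, dif_neg hv]
      rw [(hproj2 (f (Sum.inr ⟨v, hv⟩)) (hmem2 ⟨v, hv⟩)).1]
      rw [← inner_conj_symm, map_ne_zero_iff _ (starRingEnd ℂ).injective]
      have hne : (Sum.inl a : Fin n ⊕ {y : Fin m // y ≠ b}) ≠ Sum.inr ⟨v, hv⟩ := by simp
      have h2 := hf (Sum.inl a) (Sum.inr ⟨v, hv⟩) hne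
      have h3 : (vertexSum G H a b).Adj (Sum.inl a) (Sum.inr ⟨v, hv⟩) ↔ (a = a ∧ H.Adj b v) :=
        Iff.rfl
      rw [h2, h3, hw]
      simp [SimpleGraph.adj_comm]
    · rw [hF2]
      simp only [dif_neg hv, dif_neg hw]
      have hne : (Sum.inr ⟨v, hv⟩ : Fin n ⊕ {y : Fin m // y ≠ b}) ≠ Sum.inr ⟨w, hw⟩ := by
        simp [Subtype.ext_iff, hvw]
      have h2 := hf (Sum.inr ⟨v, hv⟩) (Sum.inr ⟨w, hw⟩) hne
      have h3 : (vertexSum G H a b).Adj (Sum.inr ⟨v, hv⟩) (Sum.inr ⟨w, hw⟩) ↔ H.Adj v w :=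
        Iff.rfl
      rw [h2, h3]
  have hspan1 : Submodule.span ℂ (Set.range F1) = U1 := by
    apply le_antisymm
    · rw [Submodule.span_le]
      rintro x ⟨i, rfl⟩
      by_cases hi : i = a
      · show F1 i ∈ U1
        rw [hF1]; simp only [if_pos hi]
        exact (orthogonalProjection U1 (f (Sum.inl a))).2
      · show F1 i ∈ U1
        rw [hF1]; simp only [if_neg hi]
        exact hmem1 i hi
    · rw [hU1, Submodule.span_le]
      rintro x ⟨⟨i, hi⟩, rfl⟩
      show f (Sum.inl i) ∈ Submodule.span ℂ (Set.range F1)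
      have heq : f (Sum.inl i) = F1 i := by rw [hF1]; simp only [if_neg hi]
      rw [heq]
      exact Submodule.subset_span ⟨i, rfl⟩
  have hspan2 : Submodule.span ℂ (Set.range F2) = U2 := by
    apply le_antisymm
    · rw [Submodule.span_le]
      rintro x ⟨v, rfl⟩
      by_cases hv : v = b
      · show F2 v ∈ U2
        rw [hF2]; simp only [dif_pos hv]
        exact (orthogonalProjection U2 (f (Sum.inl a))).2
      · show F2 v ∈ U2
        rw [hF2]; simp only [dif_neg hv]
        exact hmem2 ⟨v, hv⟩
    · rw [hU2, Submodule.span_le]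
      rintro x ⟨⟨v, hv⟩, rfl⟩
      show f (Sum.inr ⟨v, hv⟩) ∈ Submodule.span ℂ (Set.range F2)
      have heq : f (Sum.inr ⟨v, hv⟩) = F2 v := by rw [hF2]; simp only [dif_neg hv]
      rw [heq]
      exact Submodule.subset_span ⟨v, rfl⟩
  have key1 := frame_of_family G F1 hF1pat
  have key2 := frame_of_family H F2 hF2pat
  rw [hspan1] at key1
  rw [hspan2] at key2
  have hn' : n' ≤ Module.finrank ℂ U1 := hG _ key1
  have hm' : m' ≤ Module.finrank ℂ U2 := hH _ key2
  have hortho : U1 ⟂ U2 := by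
    rw [hU1, hU2, Submodule.isOrtho_span]
    rintro - ⟨⟨i, hi⟩, rfl⟩ - ⟨v, rfl⟩
    show (inner ℂ (f (Sum.inl i)) (f (Sum.inr v)) : ℂ) = 0
    have hne : (Sum.inl i : Fin n ⊕ {y : Fin m // y ≠ b}) ≠ Sum.inr v := by simp
    by_contra hc
    have hadj : (vertexSum G H a b).Adj (Sum.inl i) (Sum.inr v) := (hf _ _ hne).mp hc
    have : i = a ∧ H.Adj b v.1 := hadj
    exact hi this.1
  have hdisj : U1 ⊓ U2 = ⊥ := (hortho.disjoint).eq_bot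
  have hsum := Submodule.finrank_sup_add_finrank_inf_eq U1 U2
  rw [hdisj, finrank_bot] at hsum
  have hle : Module.finrank ℂ ↥(U1 ⊔ U2) ≤ d := by
    have := Submodule.finrank_le (U1 ⊔ U2)
    rwa [finrank_euclideanSpace_fin] at this
  omega

lemma vsum_construct {n m : ℕ} {G : SimpleGraph (Fin n)} {H : SimpleGraph (Fin m)}
    {a : Fin n} {b : Fin m} {d1 d2 : ℕ}
    (h1 : IsFrameGraphIn ℂ G d1) (h2 : IsFrameGraphIn ℂ H d2) :
    ∃ D, D ≤ d1 + d2 ∧ IsFrameGraphIn ℂ (vertexSum G H a b) D := by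
  classical
  obtain ⟨f1, -, hf1⟩ := h1
  obtain ⟨f2, -, hf2⟩ := h2
  set F : (Fin n ⊕ {y : Fin m // y ≠ b}) → EuclideanSpace ℂ (Fin d1 ⊕ Fin d2) :=
    fun x => match x with
      | Sum.inl i => WithLp.toLp 2 (Sum.elim (f1 i) (fun k => if i = a then f2 b k else 0))
      | Sum.inr v => WithLp.toLp 2 (Sum.elim 0 (f2 v.1))
    with hF
  have hsplit : ∀ x y : EuclideanSpace ℂ (Fin d1 ⊕ Fin d2), (inner ℂ x y : ℂ) =
      (∑ k : Fin d1, (starRingEnd ℂ) (x (Sum.inl k)) * y (Sum.inl k)) +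
      (∑ k : Fin d2, (starRingEnd ℂ) (x (Sum.inr k)) * y (Sum.inr k)) := by
    intro x y
    rw [PiLp.inner_apply, Fintype.sum_sum_type]
    simp [RCLike.inner_apply, mul_comm]
  have hinn1 : ∀ x y : EuclideanSpace ℂ (Fin d1), (inner ℂ x y : ℂ) =
      ∑ k, (starRingEnd ℂ) (x k) * y k := by
    intro x y; rw [PiLp.inner_apply]; simp [RCLike.inner_apply, mul_comm]
  have hinn2 : ∀ x y : EuclideanSpace ℂ (Fin d2), (inner ℂ x y : ℂ) =
      ∑ k, (starRingEnd ℂ) (x k) * y k := by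
    intro x y; rw [PiLp.inner_apply]; simp [RCLike.inner_apply, mul_comm]
  have hpat : ∀ x y : Fin n ⊕ {y : Fin m // y ≠ b}, x ≠ y →
      ((inner ℂ (F x) (F y) : ℂ) ≠ 0 ↔ (vertexSum G H a b).Adj x y) := by
    rintro (i | v) (j | w) hxy
    · -- inl inl
      have hij : i ≠ j := fun hc => hxy (hc ▸ rfl)
      have : (inner ℂ (F (Sum.inl i)) (F (Sum.inl j)) : ℂ) = inner ℂ (f1 i) (f1 j) := by
        rw [hsplit, hinn1]
        have : ∀ k : Fin d2,
            (starRingEnd ℂ) (F (Sum.inl i) (Sum.inr k)) * F (Sum.inl j) (Sum.inr k) = 0 := by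
          intro k
          show (starRingEnd ℂ) (if i = a then f2 b k else 0) * (if j = a then f2 b k else 0) = 0
          by_cases hi : i = a
          · rw [if_neg (show ¬ j = a from fun hj => hij (hi.trans hj.symm)), mul_zero]
          · rw [if_neg hi, map_zero, zero_mul]
        rw [Finset.sum_congr rfl (fun k _ => this k), Finset.sum_const, smul_zero, add_zero]
        rfl
      rw [this]
      show _ ↔ G.Adj i j
      exact hf1 i j hij
    · -- inl inr
      have : (inner ℂ (F (Sum.inl i)) (F (Sum.inr w)) : ℂ) =
          if i = a then (inner ℂ (f2 b) (f2 w.1) : ℂ) else 0 := by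
        rw [hsplit]
        have e1 : ∀ k : Fin d1,
            (starRingEnd ℂ) (F (Sum.inl i) (Sum.inl k)) * F (Sum.inr w) (Sum.inl k) = 0 := by
          intro k
          show (starRingEnd ℂ) (f1 i k) * (0 : ℂ) = 0
          rw [mul_zero]
        rw [Finset.sum_congr rfl (fun k _ => e1 k), Finset.sum_const, smul_zero, zero_add]
        by_cases hi : i = a
        · rw [if_pos hi, hinn2]
          apply Finset.sum_congr rfl
          intro k _
          show (starRingEnd ℂ) (if i = a then f2 b k else 0) * f2 w.1 k = _
          rw [if_pos hi]
        · rw [if_neg hi]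
          apply Finset.sum_eq_zero
          intro k _
          show (starRingEnd ℂ) (if i = a then f2 b k else 0) * f2 w.1 k = 0
          rw [if_neg hi, map_zero, zero_mul]
      rw [this]
      show _ ↔ (i = a ∧ H.Adj b w.1)
      by_cases hi : i = a
      · rw [if_pos hi]
        rw [hf2 b w.1 (Ne.symm w.2)]
        simp [hi]
      · rw [if_neg hi]
        simp [hi]
    · -- inr inl
      have : (inner ℂ (F (Sum.inr v)) (F (Sum.inl j)) : ℂ) =
          if j = a then (inner ℂ (f2 v.1) (f2 b) : ℂ) else 0 := by
        rw [hsplit]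
        have e1 : ∀ k : Fin d1,
            (starRingEnd ℂ) (F (Sum.inr v) (Sum.inl k)) * F (Sum.inl j) (Sum.inl k) = 0 := by
          intro k
          show (starRingEnd ℂ) (0 : ℂ) * f1 j k = 0
          rw [map_zero, zero_mul]
        rw [Finset.sum_congr rfl (fun k _ => e1 k), Finset.sum_const, smul_zero, zero_add]
        by_cases hj : j = a
        · rw [if_pos hj, hinn2]
          apply Finset.sum_congr rfl
          intro k _
          show (starRingEnd ℂ) (f2 v.1 k) * (if j = a then f2 b k else 0) = _
          rw [if_pos hj]
        · rw [if_neg hj]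
          apply Finset.sum_eq_zero
          intro k _
          show (starRingEnd ℂ) (f2 v.1 k) * (if j = a then f2 b k else 0) = 0
          rw [if_neg hj, mul_zero]
      rw [this]
      show _ ↔ (j = a ∧ H.Adj b v.1)
      by_cases hj : j = a
      · rw [if_pos hj]
        rw [hf2 v.1 b v.2]
        simp [hj, SimpleGraph.adj_comm]
      · rw [if_neg hj]
        simp [hj]
    · -- inr inr
      have hvw : v.1 ≠ w.1 := fun hc => hxy (by rw [Subtype.ext hc])
      have : (inner ℂ (F (Sum.inr v)) (F (Sum.inr w)) : ℂ) = inner ℂ (f2 v.1) (f2 w.1) := by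
        rw [hsplit, hinn2]
        have e1 : ∀ k : Fin d1,
            (starRingEnd ℂ) (F (Sum.inr v) (Sum.inl k)) * F (Sum.inr w) (Sum.inl k) = 0 := by
          intro k
          show (starRingEnd ℂ) (0 : ℂ) * (0 : ℂ) = 0
          rw [mul_zero]
        rw [Finset.sum_congr rfl (fun k _ => e1 k), Finset.sum_const, smul_zero, zero_add]
        rfl
      rw [this]
      show _ ↔ H.Adj v.1 w.1
      exact hf2 v.1 w.1 hvw
  refine ⟨_, ?_, frame_of_family _ F hpat⟩
  have hle := Submodule.finrank_le (Submodule.span ℂ (Set.range F))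
  rw [finrank_euclideanSpace] at hle
  simpa using hle

end AuxFrameLemmas

/-- the vertex-sum `G · H` of connected graphs is a frame graph in a complex
space of dimension `d` exactly when `n' + m' ≤ d ≤ n + m − 1`; equivalently
`mr₊^ℂ(G · H) = mr₊^ℂ(G) + mr₊^ℂ(H)`. -/
theorem isFrameGraphIn_vertexSum (n m n' m' : ℕ) (hn : 2 ≤ n) (hm : 2 ≤ m)
    (G : SimpleGraph (Fin n)) (H : SimpleGraph (Fin m)) (a : Fin n) (b : Fin m)
    (hGc : G.Connected) (hHc : H.Connected)
    (hG : ∀ d : ℕ, IsFrameGraphIn ℂ G d ↔ n' ≤ d ∧ d ≤ n)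
    (hH : ∀ d : ℕ, IsFrameGraphIn ℂ H d ↔ m' ≤ d ∧ d ≤ m) :
    (∀ d : ℕ, IsFrameGraphIn ℂ (vertexSum G H a b) d ↔ n' + m' ≤ d ∧ d ≤ n + m - 1) ∧
    mrPlus ℂ (vertexSum G H a b) = mrPlus ℂ G + mrPlus ℂ H := by
    classical
  obtain ⟨dG, hdG⟩ := frame_exists G
  obtain ⟨dH, hdH⟩ := frame_exists H
  have hn'n : n' ≤ n := le_trans ((hG dG).1 hdG).1 ((hG dG).1 hdG).2
  have hm'm : m' ≤ m := le_trans ((hH dH).1 hdH).1 ((hH dH).1 hdH).2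
  have hGlow : ∀ d, IsFrameGraphIn ℂ G d → n' ≤ d := fun d hd => ((hG d).1 hd).1
  have hHlow : ∀ d, IsFrameGraphIn ℂ H d → m' ≤ d := fun d hd => ((hH d).1 hd).1
  have hcard : Fintype.card (Fin n ⊕ {y : Fin m // y ≠ b}) = n + m - 1 := by
    have h1 : Fintype.card {y : Fin m // y ≠ b} = m - 1 := by
      simp [Fintype.card_subtype_compl]
    rw [Fintype.card_sum, Fintype.card_fin, h1]
    omega
  obtain ⟨D, hDle, hDframe⟩ := vsum_construct (a := a) (b := b)
      ((hG n').2 ⟨le_rfl, hn'n⟩) ((hH m').2 ⟨le_rfl, hm'm⟩)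
  have hDge : n' + m' ≤ D := vsum_lower hGlow hHlow hDframe
  have hDeq : D = n' + m' := le_antisymm hDle hDge
  rw [hDeq] at hDframe
  have hbase_le_card : n' + m' ≤ n + m - 1 := by
    have := frame_le_card hDframe
    rwa [hcard] at this
  have hiff : ∀ d : ℕ, IsFrameGraphIn ℂ (vertexSum G H a b) d ↔
      n' + m' ≤ d ∧ d ≤ n + m - 1 := by
    intro d
    constructor
    · intro hd
      refine ⟨vsum_lower hGlow hHlow hd, ?_⟩
      have := frame_le_card hd
      rwa [hcard] at this
    · rintro ⟨h1, h2⟩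
      exact frame_mono hDframe h1 (by rw [hcard]; exact h2)
  refine ⟨hiff, ?_⟩
  have e1 : mrPlus ℂ (vertexSum G H a b) = n' + m' := by
    rw [mrPlus_eq_sInf_frame]
    have hset : {d : ℕ | IsFrameGraphIn ℂ (vertexSum G H a b) d} =
        {d : ℕ | n' + m' ≤ d ∧ d ≤ n + m - 1} := Set.ext hiff
    rw [hset]
    refine le_antisymm (Nat.sInf_le ⟨le_rfl, hbase_le_card⟩) ?_
    exact le_csInf ⟨n' + m', le_rfl, hbase_le_card⟩ (fun x hx => hx.1)
  have e2 : mrPlus ℂ G = n' := by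
    rw [mrPlus_eq_sInf_frame]
    have hset : {d : ℕ | IsFrameGraphIn ℂ G d} = {d : ℕ | n' ≤ d ∧ d ≤ n} := Set.ext hG
    rw [hset]
    refine le_antisymm (Nat.sInf_le ⟨le_rfl, hn'n⟩) ?_
    exact le_csInf ⟨n', le_rfl, hn'n⟩ (fun x hx => hx.1)
  have e3 : mrPlus ℂ H = m' := by
    rw [mrPlus_eq_sInf_frame]
    have hset : {d : ℕ | IsFrameGraphIn ℂ H d} = {d : ℕ | m' ≤ d ∧ d ≤ m} := Set.ext hH
    rw [hset]
    refine le_antisymm (Nat.sInf_le ⟨le_rfl, hm'm⟩) ?_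
    exact le_csInf ⟨m', le_rfl, hm'm⟩ (fun x hx => hx.1)
  rw [e1, e2, e3]
end

section
/- For every n ≥ 2, mr_+^R(C_3 □ P_n) = mr_+^C(C_3 □ P_n) = 3n − 3, where C_3 is the cycle on 3 vertices and P_n is the path on n vertices. -/
open scoped ComplexOrder

section Aux

open Matrix Finset

variable {𝕜 : Type} [RCLike 𝕜]

lemma lower_bound (n : ℕ) (hn : 2 ≤ n) (A : Matrix (Fin 3 × Fin n) (Fin 3 × Fin n) 𝕜)
    (hA : ∀ v w : Fin 3 × Fin n, v ≠ w →
      (A v w ≠ 0 ↔ (SimpleGraph.cycleGraph 3 □ SimpleGraph.pathGraph n).Adj v w)) :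
    3 * n - 3 ≤ A.rank := by
  have hn1 : n - 1 < n := by omega
  -- key: kernel vectors vanishing on the last column are zero
  have key : ∀ x ∈ LinearMap.ker A.mulVecLin, (∀ i : Fin 3, x (i, ⟨n-1, hn1⟩) = 0) → x = 0 := by
    intro x hx hlast
    have hker : ∀ v : Fin 3 × Fin n, ∑ w, A v w * x w = 0 := by
      intro v
      have h0 : A.mulVec x = 0 := hx
      have := congrFun h0 v
      simpa [Matrix.mulVec, dotProduct] using this
    have claim : ∀ m : ℕ, ∀ k : ℕ, ∀ hk : k < n, n - 1 ≤ k + m → ∀ i : Fin 3, x (i, ⟨k, hk⟩) = 0 := by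
      intro m
      induction m with
      | zero =>
        intro k hk hge i
        have : k = n - 1 := by omega
        subst this
        exact hlast i
      | succ m ih =>
        intro k hk hge i
        by_cases h : n - 1 ≤ k + m
        · exact ih k hk h i
        · have hk1 : k + 1 < n := by omega
          have hsum := hker (i, ⟨k + 1, hk1⟩)
          rw [Finset.sum_eq_single (i, (⟨k, hk⟩ : Fin n))] at hsum
          · have hadj : (SimpleGraph.cycleGraph 3 □ SimpleGraph.pathGraph n).Adj
                (i, ⟨k + 1, hk1⟩) (i, ⟨k, hk⟩) := by
              rw [SimpleGraph.boxProd_adj]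
              right
              exact ⟨by rw [SimpleGraph.pathGraph_adj]; right; rfl, rfl⟩
            have hne : (i, (⟨k + 1, hk1⟩ : Fin n)) ≠ (i, (⟨k, hk⟩ : Fin n)) := by
              simp [Prod.ext_iff, Fin.ext_iff]
            have hA0 : A (i, ⟨k + 1, hk1⟩) (i, ⟨k, hk⟩) ≠ 0 := (hA _ _ hne).mpr hadj
            exact (mul_eq_zero.mp hsum).resolve_left hA0
          · rintro ⟨j, l⟩ - hne
            by_cases hl : k + 1 ≤ (l : ℕ)
            · have hxz : x (j, l) = 0 := by
                have := ih l l.isLt (by omega) j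
                simpa using this
              simp [hxz]
            · push_neg at hl
              have hne' : (i, (⟨k + 1, hk1⟩ : Fin n)) ≠ (j, l) := by
                intro h
                have := congrArg (fun p : Fin 3 × Fin n => (p.2 : ℕ)) h
                simp at this
                omega
              have hAz : A (i, ⟨k + 1, hk1⟩) (j, l) = 0 := by
                by_contra hnz
                have hadj := (hA _ _ hne').mp hnz
                rw [SimpleGraph.boxProd_adj] at hadj
                rcases hadj with ⟨-, h2⟩ | ⟨h2, h3⟩
                · have : (l : ℕ) = k + 1 := by
                    have := congrArg Fin.val h2.symm
                    simpa using this
                  omega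
                · rw [SimpleGraph.pathGraph_adj] at h2
                  simp only at h2 h3
                  have hjl : j = i := by simpa using h3.symm
                  have hlk : (l : ℕ) = k := by
                    rcases h2 with h2 | h2
                    · exact absurd h2 (by omega)
                    · omega
                  apply hne
                  subst hjl
                  simp [Prod.ext_iff, Fin.ext_iff, hlk]
              simp [hAz]
          · intro h
            exact absurd (Finset.mem_univ _) h
    funext v
    obtain ⟨i, k⟩ := v
    have := claim n k.val k.isLt (by omega) i
    simpa using this
  -- kernel has dimension ≤ 3
  have hker3 : Module.finrank 𝕜 (LinearMap.ker A.mulVecLin) ≤ 3 := by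
    set K := LinearMap.ker A.mulVecLin
    let L : K →ₗ[𝕜] (Fin 3 → 𝕜) :=
      (LinearMap.funLeft 𝕜 𝕜 (fun i : Fin 3 => ((i, ⟨n-1, hn1⟩) : Fin 3 × Fin n))).comp K.subtype
    have hinj : Function.Injective L := by
      rw [← LinearMap.ker_eq_bot, LinearMap.ker_eq_bot']
      intro ⟨x, hx⟩ hLx
      have hlast : ∀ i : Fin 3, x (i, ⟨n-1, hn1⟩) = 0 := by
        intro i
        have := congrFun hLx i
        simpa [L] using this
      exact Subtype.ext (key x hx hlast)
    calc Module.finrank 𝕜 K ≤ Module.finrank 𝕜 (Fin 3 → 𝕜) :=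
          LinearMap.finrank_le_finrank_of_injective hinj
      _ = 3 := by simp
  have hrn : A.rank + Module.finrank 𝕜 (LinearMap.ker A.mulVecLin) = 3 * n := by
    rw [Matrix.rank]
    have := LinearMap.finrank_range_add_finrank_ker A.mulVecLin
    simpa [mul_comm] using this
  omega


def ycoef (𝕜 : Type) [RCLike 𝕜] (r i : Fin 3) : 𝕜 := if r = i then 4 else 2
def xcoef (𝕜 : Type) [RCLike 𝕜] (r i : Fin 3) : 𝕜 := if r = i then 3 else -1

lemma sum_yy (i j : Fin 3) : ∑ r : Fin 3, ycoef 𝕜 r i * ycoef 𝕜 r j =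
    if i = j then 24 else 20 := by
  fin_cases i <;> fin_cases j <;>
    simp [Fin.sum_univ_three, ycoef] <;> norm_num

lemma sum_xx (i j : Fin 3) : ∑ r : Fin 3, xcoef 𝕜 r i * xcoef 𝕜 r j =
    if i = j then 11 else -5 := by
  fin_cases i <;> fin_cases j <;>
    simp [Fin.sum_univ_three, xcoef] <;> norm_num

lemma sum_yx (i j : Fin 3) : ∑ r : Fin 3, ycoef 𝕜 r i * xcoef 𝕜 r j =
    if i = j then 8 else 0 := by
  fin_cases i <;> fin_cases j <;>
    simp [Fin.sum_univ_three, ycoef, xcoef] <;> norm_num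

lemma sum_xy (i j : Fin 3) : ∑ r : Fin 3, xcoef 𝕜 r i * ycoef 𝕜 r j =
    if i = j then 8 else 0 := by
  fin_cases i <;> fin_cases j <;>
    simp [Fin.sum_univ_three, ycoef, xcoef] <;> norm_num

lemma master (N : ℕ) (s t c d : ℕ) (g h : Fin 3 → 𝕜) :
    (∑ p : Fin 3 × Fin N, (if (p.2 : ℕ) + s = c then g p.1 else 0) *
      (if (p.2 : ℕ) + t = d then h p.1 else 0))
    = if s ≤ c ∧ c - s = d - t ∧ t ≤ d ∧ c - s < N then ∑ r : Fin 3, g r * h r else 0 := by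
  rw [Fintype.sum_prod_type_right]
  have hterm : ∀ m : Fin N,
      (∑ r : Fin 3, (if (m : ℕ) + s = c then g r else 0) * (if (m : ℕ) + t = d then h r else 0))
      = if (m : ℕ) + s = c ∧ (m : ℕ) + t = d then ∑ r : Fin 3, g r * h r else 0 := by
    intro m
    by_cases h1 : (m : ℕ) + s = c <;> by_cases h2 : (m : ℕ) + t = d <;>
      simp [h1, h2]
  rw [Finset.sum_congr rfl fun m _ => hterm m]
  by_cases hc : s ≤ c ∧ c - s = d - t ∧ t ≤ d ∧ c - s < N
  · rw [if_pos hc]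
    obtain ⟨hsc, hcd, htd, hlt⟩ := hc
    rw [Finset.sum_eq_single (⟨c - s, hlt⟩ : Fin N)]
    · rw [if_pos ⟨by simp; omega, by simp; omega⟩]
    · intro m _ hm
      rw [if_neg]
      rintro ⟨e1, e2⟩
      exact hm (Fin.ext (by simp only [Fin.val_mk]; omega))
    · intro h'
      exact absurd (Finset.mem_univ _) h'
  · rw [if_neg hc]
    apply Finset.sum_eq_zero
    intro m _
    rw [if_neg]
    rintro ⟨e1, e2⟩
    exact hc ⟨by omega, by omega, by omega, by omega⟩

def Bmat (𝕜 : Type) [RCLike 𝕜] (n : ℕ) :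
    Matrix (Fin 3 × Fin (n-1)) (Fin 3 × Fin n) 𝕜 :=
  fun p v => (if (p.2 : ℕ) + 0 = (v.2 : ℕ) then ycoef 𝕜 p.1 v.1 else 0)
    + (if (p.2 : ℕ) + 1 = (v.2 : ℕ) then xcoef 𝕜 p.1 v.1 else 0)

lemma star_Bmat (n : ℕ) (p : Fin 3 × Fin (n-1)) (v : Fin 3 × Fin n) :
    star (Bmat 𝕜 n p v) = Bmat 𝕜 n p v := by
  simp only [Bmat, ycoef, xcoef]
  split_ifs <;> simp

lemma entry_formula (n : ℕ) (i j : Fin 3) (k l : Fin n) :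
    ((Bmat 𝕜 n)ᴴ * Bmat 𝕜 n) (i, k) (j, l) =
      (if 0 ≤ (k:ℕ) ∧ (k:ℕ) - 0 = (l:ℕ) - 0 ∧ 0 ≤ (l:ℕ) ∧ (k:ℕ) - 0 < n - 1 then (if i = j then (24:𝕜) else 20) else 0)
      + (if 0 ≤ (k:ℕ) ∧ (k:ℕ) - 0 = (l:ℕ) - 1 ∧ 1 ≤ (l:ℕ) ∧ (k:ℕ) - 0 < n - 1 then (if i = j then (8:𝕜) else 0) else 0)
      + (if 1 ≤ (k:ℕ) ∧ (k:ℕ) - 1 = (l:ℕ) - 0 ∧ 0 ≤ (l:ℕ) ∧ (k:ℕ) - 1 < n - 1 then (if i = j then (8:𝕜) else 0) else 0)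
      + (if 1 ≤ (k:ℕ) ∧ (k:ℕ) - 1 = (l:ℕ) - 1 ∧ 1 ≤ (l:ℕ) ∧ (k:ℕ) - 1 < n - 1 then (if i = j then (11:𝕜) else -5) else 0) := by
  rw [Matrix.mul_apply]
  simp only [Matrix.conjTranspose_apply, star_Bmat]
  have expand : ∀ p : Fin 3 × Fin (n-1),
      Bmat 𝕜 n p (i, k) * Bmat 𝕜 n p (j, l) =
        (if (p.2 : ℕ) + 0 = (k:ℕ) then ycoef 𝕜 p.1 i else 0) *
          (if (p.2 : ℕ) + 0 = (l:ℕ) then ycoef 𝕜 p.1 j else 0)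
        + (if (p.2 : ℕ) + 0 = (k:ℕ) then ycoef 𝕜 p.1 i else 0) *
          (if (p.2 : ℕ) + 1 = (l:ℕ) then xcoef 𝕜 p.1 j else 0)
        + (if (p.2 : ℕ) + 1 = (k:ℕ) then xcoef 𝕜 p.1 i else 0) *
          (if (p.2 : ℕ) + 0 = (l:ℕ) then ycoef 𝕜 p.1 j else 0)
        + (if (p.2 : ℕ) + 1 = (k:ℕ) then xcoef 𝕜 p.1 i else 0) *
          (if (p.2 : ℕ) + 1 = (l:ℕ) then xcoef 𝕜 p.1 j else 0) := by
    intro p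
    simp only [Bmat]
    ring
  rw [Finset.sum_congr rfl fun p _ => expand p]
  rw [Finset.sum_add_distrib, Finset.sum_add_distrib, Finset.sum_add_distrib]
  rw [master (n-1) 0 0 (k:ℕ) (l:ℕ) (fun r => ycoef 𝕜 r i) (fun r => ycoef 𝕜 r j),
      master (n-1) 0 1 (k:ℕ) (l:ℕ) (fun r => ycoef 𝕜 r i) (fun r => xcoef 𝕜 r j),
      master (n-1) 1 0 (k:ℕ) (l:ℕ) (fun r => xcoef 𝕜 r i) (fun r => ycoef 𝕜 r j),
      master (n-1) 1 1 (k:ℕ) (l:ℕ) (fun r => xcoef 𝕜 r i) (fun r => xcoef 𝕜 r j)]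
  rw [sum_yy, sum_yx, sum_xy, sum_xx]

lemma pattern_lemma (n : ℕ) (hn : 2 ≤ n) :
    ∀ v w : Fin 3 × Fin n, v ≠ w →
      (((Bmat 𝕜 n)ᴴ * Bmat 𝕜 n) v w ≠ 0 ↔ (SimpleGraph.cycleGraph 3 □ SimpleGraph.pathGraph n).Adj v w) := by
  rintro ⟨i, k⟩ ⟨j, l⟩ hne
  rw [entry_formula n i j k l]
  rw [SimpleGraph.boxProd_adj]
  simp only [SimpleGraph.cycleGraph_three_eq_top, SimpleGraph.top_adj, SimpleGraph.pathGraph_adj]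
  by_cases hkl : (k:ℕ) = (l:ℕ)
  · have hkl' : k = l := Fin.ext hkl
    have hij : i ≠ j := fun h => hne (by rw [h, hkl'])
    rw [if_neg (show ¬(0 ≤ (k:ℕ) ∧ (k:ℕ) - 0 = (l:ℕ) - 1 ∧ 1 ≤ (l:ℕ) ∧ (k:ℕ) - 0 < n - 1) by omega),
        if_neg (show ¬(1 ≤ (k:ℕ) ∧ (k:ℕ) - 1 = (l:ℕ) - 0 ∧ 0 ≤ (l:ℕ) ∧ (k:ℕ) - 1 < n - 1) by omega),
        if_neg hij, if_neg hij]
    refine iff_of_true ?_ (Or.inl ⟨hij, hkl'⟩)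
    by_cases h0 : (k:ℕ) = 0
    · rw [if_pos (show 0 ≤ (k:ℕ) ∧ (k:ℕ) - 0 = (l:ℕ) - 0 ∧ 0 ≤ (l:ℕ) ∧ (k:ℕ) - 0 < n - 1 by omega),
          if_neg (show ¬(1 ≤ (k:ℕ) ∧ (k:ℕ) - 1 = (l:ℕ) - 1 ∧ 1 ≤ (l:ℕ) ∧ (k:ℕ) - 1 < n - 1) by omega)]
      norm_num
    · by_cases hlast : (k:ℕ) = n - 1
      · rw [if_neg (show ¬(0 ≤ (k:ℕ) ∧ (k:ℕ) - 0 = (l:ℕ) - 0 ∧ 0 ≤ (l:ℕ) ∧ (k:ℕ) - 0 < n - 1) by omega),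
            if_pos (show 1 ≤ (k:ℕ) ∧ (k:ℕ) - 1 = (l:ℕ) - 1 ∧ 1 ≤ (l:ℕ) ∧ (k:ℕ) - 1 < n - 1 by
              refine ⟨by omega, by omega, by omega, by omega⟩)]
        norm_num
      · rw [if_pos (show 0 ≤ (k:ℕ) ∧ (k:ℕ) - 0 = (l:ℕ) - 0 ∧ 0 ≤ (l:ℕ) ∧ (k:ℕ) - 0 < n - 1 by omega),
            if_pos (show 1 ≤ (k:ℕ) ∧ (k:ℕ) - 1 = (l:ℕ) - 1 ∧ 1 ≤ (l:ℕ) ∧ (k:ℕ) - 1 < n - 1 by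
              refine ⟨by omega, by omega, by omega, by omega⟩)]
        norm_num
  · by_cases hkl2 : (k:ℕ) + 1 = (l:ℕ)
    · rw [if_neg (show ¬(0 ≤ (k:ℕ) ∧ (k:ℕ) - 0 = (l:ℕ) - 0 ∧ 0 ≤ (l:ℕ) ∧ (k:ℕ) - 0 < n - 1) by omega),
          if_pos (show 0 ≤ (k:ℕ) ∧ (k:ℕ) - 0 = (l:ℕ) - 1 ∧ 1 ≤ (l:ℕ) ∧ (k:ℕ) - 0 < n - 1 by
            refine ⟨by omega, by omega, by omega, by omega⟩),
          if_neg (show ¬(1 ≤ (k:ℕ) ∧ (k:ℕ) - 1 = (l:ℕ) - 0 ∧ 0 ≤ (l:ℕ) ∧ (k:ℕ) - 1 < n - 1) by omega),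
          if_neg (show ¬(1 ≤ (k:ℕ) ∧ (k:ℕ) - 1 = (l:ℕ) - 1 ∧ 1 ≤ (l:ℕ) ∧ (k:ℕ) - 1 < n - 1) by omega)]
      simp only [zero_add, add_zero]
      by_cases hij : i = j
      · rw [if_pos hij]
        exact iff_of_true (by norm_num) (Or.inr ⟨Or.inl hkl2, hij⟩)
      · rw [if_neg hij]
        refine iff_of_false (by simp) ?_
        rintro (⟨-, h⟩ | ⟨-, h⟩)
        · exact hkl (congrArg Fin.val h)
        · exact hij h
    · by_cases hkl3 : (l:ℕ) + 1 = (k:ℕ)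
      · rw [if_neg (show ¬(0 ≤ (k:ℕ) ∧ (k:ℕ) - 0 = (l:ℕ) - 0 ∧ 0 ≤ (l:ℕ) ∧ (k:ℕ) - 0 < n - 1) by omega),
            if_neg (show ¬(0 ≤ (k:ℕ) ∧ (k:ℕ) - 0 = (l:ℕ) - 1 ∧ 1 ≤ (l:ℕ) ∧ (k:ℕ) - 0 < n - 1) by omega),
            if_pos (show 1 ≤ (k:ℕ) ∧ (k:ℕ) - 1 = (l:ℕ) - 0 ∧ 0 ≤ (l:ℕ) ∧ (k:ℕ) - 1 < n - 1 by
              refine ⟨by omega, by omega, by omega, by omega⟩),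
            if_neg (show ¬(1 ≤ (k:ℕ) ∧ (k:ℕ) - 1 = (l:ℕ) - 1 ∧ 1 ≤ (l:ℕ) ∧ (k:ℕ) - 1 < n - 1) by omega)]
        simp only [zero_add, add_zero]
        by_cases hij : i = j
        · rw [if_pos hij]
          exact iff_of_true (by norm_num) (Or.inr ⟨Or.inr hkl3, hij⟩)
        · rw [if_neg hij]
          refine iff_of_false (by simp) ?_
          rintro (⟨-, h⟩ | ⟨-, h⟩)
          · exact hkl (congrArg Fin.val h)
          · exact hij h
      · rw [if_neg (show ¬(0 ≤ (k:ℕ) ∧ (k:ℕ) - 0 = (l:ℕ) - 0 ∧ 0 ≤ (l:ℕ) ∧ (k:ℕ) - 0 < n - 1) by omega),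
            if_neg (show ¬(0 ≤ (k:ℕ) ∧ (k:ℕ) - 0 = (l:ℕ) - 1 ∧ 1 ≤ (l:ℕ) ∧ (k:ℕ) - 0 < n - 1) by omega),
            if_neg (show ¬(1 ≤ (k:ℕ) ∧ (k:ℕ) - 1 = (l:ℕ) - 0 ∧ 0 ≤ (l:ℕ) ∧ (k:ℕ) - 1 < n - 1) by omega),
            if_neg (show ¬(1 ≤ (k:ℕ) ∧ (k:ℕ) - 1 = (l:ℕ) - 1 ∧ 1 ≤ (l:ℕ) ∧ (k:ℕ) - 1 < n - 1) by omega)]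
        refine iff_of_false (by simp) ?_
        rintro (⟨-, h⟩ | ⟨h | h, -⟩)
        · exact hkl (congrArg Fin.val h)
        · exact hkl2 h
        · exact hkl3 h

lemma rank_upper (n : ℕ) (hn : 2 ≤ n) : ((Bmat 𝕜 n)ᴴ * Bmat 𝕜 n).rank ≤ 3 * n - 3 := by
  rw [Matrix.rank_conjTranspose_mul_self]
  refine le_trans (Matrix.rank_le_card_height _) ?_
  simp [Fintype.card_prod]
  omega

lemma mrPlus_eq (𝕜 : Type) [RCLike 𝕜] (n : ℕ) (hn : 2 ≤ n) :
    mrPlus 𝕜 (SimpleGraph.cycleGraph 3 □ SimpleGraph.pathGraph n) = 3 * n - 3 := by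
  have hrank : ((Bmat 𝕜 n)ᴴ * Bmat 𝕜 n).rank = 3 * n - 3 :=
    le_antisymm (rank_upper n hn) (lower_bound n hn _ (pattern_lemma n hn))
  have hmem : (3 * n - 3) ∈ {r : ℕ | ∃ A : Matrix (Fin 3 × Fin n) (Fin 3 × Fin n) 𝕜,
      A.PosSemidef ∧ (∀ i j, i ≠ j →
        (A i j ≠ 0 ↔ (SimpleGraph.cycleGraph 3 □ SimpleGraph.pathGraph n).Adj i j)) ∧
      A.rank = r} :=
    ⟨(Bmat 𝕜 n)ᴴ * Bmat 𝕜 n, Matrix.posSemidef_conjTranspose_mul_self _,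
      pattern_lemma n hn, hrank⟩
  refine le_antisymm (Nat.sInf_le hmem) (le_csInf ⟨_, hmem⟩ ?_)
  rintro r ⟨A, -, hpat, rfl⟩
  exact lower_bound n hn A hpat

end Aux

/-- `mr₊^ℝ(C₃ □ P_n) = mr₊^ℂ(C₃ □ P_n) = 3n − 3` for `n ≥ 2`. -/
theorem mrPlus_cycleThree_boxProd_path (n : ℕ) (hn : 2 ≤ n) :
    mrPlus ℝ (SimpleGraph.cycleGraph 3 □ SimpleGraph.pathGraph n) = 3 * n - 3 ∧
    mrPlus ℂ (SimpleGraph.cycleGraph 3 □ SimpleGraph.pathGraph n) = 3 * n - 3 := by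
  exact ⟨mrPlus_eq ℝ n hn, mrPlus_eq ℂ n hn⟩
end
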